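/- arXiv:2302.02831 — 2 statements merged into one kernel-verified Lean document; each statement's English description precedes it below -/
import Mathlib

section
/- For every positive integer n, the following three conditions are equivalent: (a) every finite group of order at most n admits a uniform cyclic group factorization; (b) every finite group of order at most n that is not a cyclic group of prime power order admits a proper uniform group factorization; (c) every finite simple group of order at most n that is not a cyclic group of prime power order admits a proper uniform group factorization. -/
/-- The number of ways to write `g` as an ordered product `h₁ * h₂ * ⋯ * h_k`
with `hᵢ` an element of the `i`-th member of the list `L` of subsets of `G`. -/
noncomputable def multCount {G : Type*} [Group G] (L : List (Set G)) (g : G) : ℕ :=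
  Nat.card {h : List G // List.Forall₂ (· ∈ ·) h L ∧ h.prod = g}

/-- `G` admits a uniform cyclic group factorization. -/
def AdmitsUCF (G : Type*) [Group G] : Prop :=
  ∃ (k : ℕ) (H : Fin k → Subgroup G) (t : ℕ),
    1 ≤ k ∧ 0 < t ∧ (∀ i, IsCyclic (H i)) ∧
    ∀ g : G, multCount (List.ofFn fun i => (H i : Set G)) g = t

/-- `G` admits a proper uniform group factorization (all factors are proper subgroups). -/
def AdmitsProperUGF (G : Type*) [Group G] : Prop :=
  ∃ (k : ℕ) (H : Fin k → Subgroup G) (t : ℕ),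
    1 ≤ k ∧ 0 < t ∧ (∀ i, H i ≠ ⊤) ∧
    ∀ g : G, multCount (List.ofFn fun i => (H i : Set G)) g = t

/-- `G` is a cyclic group whose order is a prime power `p ^ r` (`r ≥ 0`). -/
def IsCyclicOfPrimePowerOrder (G : Type*) [Group G] : Prop :=
  IsCyclic G ∧ ∃ p r : ℕ, p.Prime ∧ Nat.card G = p ^ r


variable {G : Type*} [Group G]


instance listLenFinite [Finite G] (n : ℕ) : Finite {l : List G // l.length = n} :=
  Finite.of_equiv _ (Equiv.vectorEquivFin G n).symm

lemma multCount_finite [Finite G] (L : List (Set G)) (g : G) :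
    Finite {h : List G // List.Forall₂ (· ∈ ·) h L ∧ h.prod = g} := by
  refine Finite.of_injective
    (fun (x : {h : List G // List.Forall₂ (· ∈ ·) h L ∧ h.prod = g}) =>
      (⟨x.1, x.2.1.length_eq⟩ : {l : List G // l.length = L.length})) ?_
  intro a b hab
  simp only [Subtype.mk.injEq] at hab
  exact Subtype.ext hab

lemma natCard_sigma {ι : Type*} [Fintype ι] (f : ι → Type*) [∀ i, Finite (f i)] :
    Nat.card (Σ i, f i) = ∑ i, Nat.card (f i) := by
  letI := fun i => Fintype.ofFinite (f i)
  simp [Nat.card_eq_fintype_card, Fintype.card_sigma]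

lemma multCount_nil_one : multCount ([] : List (Set G)) 1 = 1 := by
  rw [multCount]
  have : Unique {h : List G // List.Forall₂ (· ∈ ·) h ([] : List (Set G)) ∧ h.prod = 1} := by
    refine ⟨⟨⟨[], List.Forall₂.nil, List.prod_nil⟩⟩, ?_⟩
    rintro ⟨h, hf, hp⟩
    cases hf; rfl
  exact Nat.card_unique

lemma multCount_nil_ne (g : G) (hg : g ≠ 1) : multCount ([] : List (Set G)) g = 0 := by
  rw [multCount]
  have : IsEmpty {h : List G // List.Forall₂ (· ∈ ·) h ([] : List (Set G)) ∧ h.prod = g} := by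
    constructor; rintro ⟨h, hf, hp⟩; cases hf; exact hg (by simpa using hp.symm)
  exact Nat.card_of_isEmpty

open Classical in
lemma multCount_nil (g : G) : multCount ([] : List (Set G)) g = if g = 1 then 1 else 0 := by
  split
  · subst ‹g = 1›; exact multCount_nil_one
  · exact multCount_nil_ne g ‹g ≠ 1›

open Classical in
lemma multCount_cons [Fintype G] (A : Set G) (L : List (Set G)) (g : G) :
    multCount (A :: L) g = ∑ a : G, if a ∈ A then multCount L (a⁻¹ * g) else 0 := by
  classical
  have hfin : ∀ (L' : List (Set G)) (g' : G),
      Finite {h : List G // List.Forall₂ (· ∈ ·) h L' ∧ h.prod = g'} := multCount_finite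
  have e : {h : List G // List.Forall₂ (· ∈ ·) h (A :: L) ∧ h.prod = g} ≃
      Σ a : G, {h : List G // (a ∈ A ∧ List.Forall₂ (· ∈ ·) h L) ∧ h.prod = a⁻¹ * g} := by
    refine (Equiv.ofBijective
      (fun x : Σ a : G, {h : List G // (a ∈ A ∧ List.Forall₂ (· ∈ ·) h L) ∧ h.prod = a⁻¹ * g} =>
        (⟨x.1 :: x.2.1, List.Forall₂.cons x.2.2.1.1 x.2.2.1.2, by
          rw [List.prod_cons, x.2.2.2, mul_inv_cancel_left]⟩ :
          {h : List G // List.Forall₂ (· ∈ ·) h (A :: L) ∧ h.prod = g})) ⟨?_, ?_⟩).symm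
    · rintro ⟨a, h, hh⟩ ⟨a', h', hh'⟩ heq
      simp only [Subtype.mk.injEq, List.cons.injEq] at heq
      obtain ⟨rfl, rfl⟩ := heq
      rfl
    · rintro ⟨h, hf, hp⟩
      cases h with
      | nil => cases hf
      | cons a h' =>
        cases hf with
        | cons ha hl =>
          exact ⟨⟨a, h', ⟨ha, hl⟩, by rw [List.prod_cons] at hp; rw [← hp, inv_mul_cancel_left]⟩, rfl⟩
  haveI : ∀ a : G, Finite {h : List G // (a ∈ A ∧ List.Forall₂ (· ∈ ·) h L) ∧ h.prod = a⁻¹ * g} := by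
    intro a
    refine Finite.of_injective
      (fun (x : {h : List G // (a ∈ A ∧ List.Forall₂ (· ∈ ·) h L) ∧ h.prod = a⁻¹ * g}) =>
        (⟨x.1, x.2.1.2.length_eq⟩ : {l : List G // l.length = L.length})) ?_
    intro x y hxy
    simp only [Subtype.mk.injEq] at hxy
    exact Subtype.ext hxy
  rw [multCount, Nat.card_congr e, natCard_sigma]
  refine Finset.sum_congr rfl fun a _ => ?_
  by_cases ha : a ∈ A
  · rw [if_pos ha, multCount]
    apply Nat.card_congr
    exact Equiv.subtypeEquivRight (by tauto)
  · rw [if_neg ha]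
    have : IsEmpty {h : List G // (a ∈ A ∧ List.Forall₂ (· ∈ ·) h L) ∧ h.prod = a⁻¹ * g} :=
      ⟨fun x => ha x.2.1.1⟩
    exact Nat.card_of_isEmpty

open Classical in
lemma multCount_singleton [Fintype G] (S : Set G) (g : G) :
    multCount [S] g = if g ∈ S then 1 else 0 := by
  rw [multCount_cons]
  have h1 : ∀ a : G, (if a ∈ S then multCount ([] : List (Set G)) (a⁻¹ * g) else 0)
      = if a = g then (if a ∈ S then 1 else 0) else 0 := by
    intro a
    rw [multCount_nil]
    by_cases hag : a = g
    · subst hag; simp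
    · have : ¬ (a⁻¹ * g = 1) := fun h => hag (by
        have := congrArg (a * ·) h; simpa [mul_assoc] using this.symm)
      simp [hag, this]
  rw [Finset.sum_congr rfl fun a _ => h1 a, Finset.sum_ite_eq' Finset.univ g
    (fun a => if a ∈ S then 1 else 0)]
  simp

open Classical in
lemma multCount_append [Fintype G] (M L : List (Set G)) (g : G) :
    multCount (M ++ L) g = ∑ x : G, multCount M x * multCount L (x⁻¹ * g) := by
  induction M generalizing g with
  | nil =>
    rw [List.nil_append]
    have : ∀ x : G, multCount ([] : List (Set G)) x * multCount L (x⁻¹ * g)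
        = if x = 1 then multCount L (x⁻¹ * g) else 0 := by
      intro x; rw [multCount_nil]; split <;> simp
    rw [Finset.sum_congr rfl fun x _ => this x,
      Finset.sum_ite_eq' Finset.univ 1 (fun x => multCount L (x⁻¹ * g))]
    simp
  | cons A M' ih =>
    rw [List.cons_append, multCount_cons]
    conv_rhs => rw [Finset.sum_congr rfl fun x (_ : x ∈ Finset.univ) => by
      rw [multCount_cons (A := A) (L := M') (g := x)]]
    have rhs : ∀ y : G,
        (∑ a : G, if a ∈ A then multCount M' (a⁻¹ * y) else 0) * multCount L (y⁻¹ * g)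
        = ∑ a : G, (if a ∈ A then multCount M' (a⁻¹ * y) * multCount L (y⁻¹ * g) else 0) := by
      intro y; rw [Finset.sum_mul]; exact Finset.sum_congr rfl fun a _ => by split <;> simp
    rw [Finset.sum_congr rfl fun y _ => rhs y, Finset.sum_comm]
    refine Finset.sum_congr rfl fun a _ => ?_
    by_cases ha : a ∈ A
    · simp only [if_pos ha, ih]
      refine Fintype.sum_equiv (Equiv.mulLeft a) _ _ fun x => ?_
      simp [mul_assoc, mul_inv_rev]
    · simp [ha]

open Classical in
lemma multCount_comp [Fintype G] (L₁ L₂ M : List (Set G)) (S : Set G) (t : ℕ)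
    (hM : ∀ x : G, multCount M x = if x ∈ S then t else 0) (g : G) :
    multCount (L₁ ++ (M ++ L₂)) g = t * multCount (L₁ ++ (S :: L₂)) g := by
  rw [multCount_append, multCount_append (L := S :: L₂), Finset.mul_sum]
  refine Finset.sum_congr rfl fun x _ => ?_
  rw [multCount_append, multCount_cons]
  have : ∀ z : G, multCount M z * multCount L₂ (z⁻¹ * (x⁻¹ * g))
      = t * (if z ∈ S then multCount L₂ (z⁻¹ * (x⁻¹ * g)) else 0) := by
    intro z; rw [hM z]; split <;> ring
  rw [Finset.sum_congr rfl fun z _ => this z, ← Finset.mul_sum]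
  ring

section Map
variable {H : Type*} [Group H]

lemma multCount_map (φ : H →* G) (hφ : Function.Injective φ) (L : List (Set H)) (x : H) :
    multCount (L.map (fun s => φ '' s)) (φ x) = multCount L x := by
  rw [multCount, multCount]
  apply Nat.card_congr
  refine (Equiv.ofBijective (fun (y : {h : List H // List.Forall₂ (· ∈ ·) h L ∧ h.prod = x}) =>
    (⟨y.1.map φ, ?_, ?_⟩ : {h : List G //
      List.Forall₂ (· ∈ ·) h (L.map (fun s => φ '' s)) ∧ h.prod = φ x})) ⟨?_, ?_⟩).symm
  · rw [List.forall₂_map_left_iff, List.forall₂_map_right_iff]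
    exact y.2.1.imp fun a s h => Set.mem_image_of_mem φ h
  · exact (List.prod_hom y.1 φ).trans (congrArg φ y.2.2)
  · intro y z hyz
    simp only [Subtype.mk.injEq] at hyz
    exact Subtype.ext (List.map_injective_iff.mpr hφ hyz)
  · rintro ⟨h, hf, hp⟩
    rw [List.forall₂_map_right_iff] at hf
    have key : ∀ (L' : List (Set H)) (h' : List G),
        List.Forall₂ (fun a s => a ∈ φ '' s) h' L' →
        ∃ l : List H, l.map φ = h' ∧ List.Forall₂ (· ∈ ·) l L' := by
      intro L' h' hf'
      induction hf' with
      | nil => exact ⟨[], rfl, List.Forall₂.nil⟩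
      | cons hmem htail ih =>
        obtain ⟨l, hl, hfl⟩ := ih
        obtain ⟨b, hb, rfl⟩ := hmem
        exact ⟨b :: l, by rw [List.map_cons, hl], List.Forall₂.cons hb hfl⟩
    obtain ⟨l, rfl, hfl⟩ := key L h hf
    have hpl : l.prod = x := by
      apply hφ
      rw [← hp, List.prod_hom l φ]
    exact ⟨⟨l, hfl, hpl⟩, rfl⟩

lemma multCount_eq_zero_of_not_mem (L : List (Set G)) (K : Subgroup G)
    (hL : ∀ s ∈ L, s ⊆ (K : Set G)) (g : G) (hg : g ∉ K) : multCount L g = 0 := by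
  rw [multCount]
  have key : ∀ (h' : List G) (L' : List (Set G)), List.Forall₂ (· ∈ ·) h' L' →
      (∀ s ∈ L', s ⊆ (K : Set G)) → ∀ x ∈ h', x ∈ K := by
    intro h' L' hf
    induction hf with
    | nil => intro _ x hx; cases hx
    | @cons a s l ls hmem htail ih =>
      intro hL' x hx
      rcases List.mem_cons.mp hx with rfl | hx'
      · exact hL' s (List.mem_cons_self) hmem
      · exact ih (fun s' hs' => hL' s' (List.mem_cons_of_mem _ hs')) x hx'
  have : IsEmpty {h : List G // List.Forall₂ (· ∈ ·) h L ∧ h.prod = g} := by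
    constructor
    rintro ⟨h, hf, rfl⟩
    exact hg (Subgroup.list_prod_mem K (key h L hf hL))
  exact Nat.card_of_isEmpty

open Classical in
lemma multCount_mapped_subgroup [Fintype G] (K : Subgroup G) (LL : List (Subgroup K)) (t : ℕ)
    (hu : ∀ x : K, multCount (LL.map SetLike.coe) x = t) (g : G) :
    multCount ((LL.map (Subgroup.map K.subtype)).map SetLike.coe) g
      = if g ∈ K then t else 0 := by
  have hlist : (LL.map (Subgroup.map K.subtype)).map SetLike.coe
      = (LL.map SetLike.coe).map (fun s => ⇑K.subtype '' s) := by
    rw [List.map_map, List.map_map]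
    exact List.map_congr_left fun C _ => by
      simp only [Function.comp_apply]
      exact Subgroup.coe_map K.subtype C
  rw [hlist]
  split
  · next hgK =>
    have : g = K.subtype ⟨g, hgK⟩ := rfl
    rw [this, multCount_map K.subtype K.subtype_injective]
    exact hu _
  · next hgK =>
    refine multCount_eq_zero_of_not_mem _ K ?_ g hgK
    intro s hs
    simp only [List.mem_map] at hs
    obtain ⟨s', _, rfl⟩ := hs
    intro x hx
    obtain ⟨y, _, rfl⟩ := hx
    exact y.2
end Map

open Classical in
lemma multCount_join [Fintype G] :
    ∀ P : List (Set G × List (Set G) × ℕ),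
    (∀ p ∈ P, ∀ x : G, multCount p.2.1 x = if x ∈ p.1 then p.2.2 else 0) →
    ∀ g : G, multCount ((P.map (fun p => p.2.1)).flatten) g
      = (P.map fun p => p.2.2).prod * multCount (P.map fun p => p.1) g := by
  intro P
  induction P with
  | nil => intro _ g; simp
  | cons p P' ih =>
    intro hP g
    have hp := hP p (List.mem_cons_self)
    have hrest := fun p' hp' => hP p' (List.mem_cons_of_mem _ hp')
    simp only [List.map_cons, List.flatten_cons, List.prod_cons]
    have step1 : multCount (p.2.1 ++ (P'.map (fun p => p.2.1)).flatten) g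
        = p.2.2 * multCount (p.1 :: (P'.map (fun p => p.2.1)).flatten) g := by
      have := multCount_comp ([] : List (Set G)) ((P'.map (fun p => p.2.1)).flatten)
        p.2.1 p.1 p.2.2 hp g
      simpa using this
    rw [step1, multCount_cons, multCount_cons]
    have inner : ∀ a : G,
        (if a ∈ p.1 then multCount ((P'.map (fun p => p.2.1)).flatten) (a⁻¹ * g) else 0)
        = (P'.map fun p => p.2.2).prod *
          (if a ∈ p.1 then multCount (P'.map fun p => p.1) (a⁻¹ * g) else 0) := by
      intro a
      split
      · exact ih hrest (a⁻¹ * g)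
      · simp
    rw [Finset.sum_congr rfl fun a _ => inner a, ← Finset.mul_sum]
    ring

lemma sum_ite_count [Fintype G] (p : G → Prop) [DecidablePred p] (c : ℕ) :
    (∑ a : G, if p a then c else 0) = Nat.card {a : G // p a} * c := by
  rw [← Finset.sum_filter, Finset.sum_const, smul_eq_mul, Nat.card_eq_fintype_card,
    Fintype.card_subtype]

open Classical in
lemma proj_sum [Fintype G] {Q : Type*} [Group Q] [Fintype Q] (π : G →* Q) :
    ∀ P : List (Subgroup G × Subgroup Q),
    (∀ p ∈ P, ∀ x : G, x ∈ p.1 → π x ∈ p.2) →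
    (∀ p ∈ P, ∀ b : Q, b ∈ p.2 →
        Nat.card {x : G // x ∈ p.1 ∧ π x = b}
      = Nat.card {x : G // x ∈ p.1 ∧ π x = 1}) →
    ∀ q : Q, (∑ x : G, if π x = q then multCount (P.map fun p => SetLike.coe p.1) x else 0)
      = (P.map fun p => Nat.card {x : G // x ∈ p.1 ∧ π x = 1}).prod
        * multCount (P.map fun p => SetLike.coe p.2) q := by
  intro P
  induction P with
  | nil =>
    intro _ _ q
    simp only [List.map_nil, List.prod_nil, one_mul]
    have h1 : ∀ x : G, (if π x = q then multCount ([] : List (Set G)) x else 0)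
        = if x = 1 then (if π x = q then 1 else 0) else 0 := by
      intro x
      rw [multCount_nil]
      by_cases hx : x = 1 <;> by_cases hq : π x = q <;> simp [hx, hq]
    rw [Finset.sum_congr rfl fun x _ => h1 x,
      Finset.sum_ite_eq' Finset.univ 1 (fun x => if π x = q then 1 else 0)]
    rw [multCount_nil]
    simp [eq_comm]
  | cons p P' ih =>
    intro hmem hfib q
    have hmem1 := hmem p (List.mem_cons_self)
    have hfib1 := hfib p (List.mem_cons_self)
    have ih' := ih (fun p' h => hmem p' (List.mem_cons_of_mem _ h))
      (fun p' h => hfib p' (List.mem_cons_of_mem _ h))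
    simp only [List.map_cons, List.prod_cons]
    set d : ℕ := Nat.card {x : G // x ∈ p.1 ∧ π x = 1} with hd
    set D : ℕ := (P'.map fun p => Nat.card {x : G // x ∈ p.1 ∧ π x = 1}).prod with hD
    -- step A: expand cons inside
    have stepA : ∀ x : G, (if π x = q then
          multCount (SetLike.coe p.1 :: (P'.map fun p => SetLike.coe p.1)) x else 0)
        = ∑ a : G, (if a ∈ p.1 ∧ π x = q then
            multCount (P'.map fun p => SetLike.coe p.1) (a⁻¹ * x) else 0) := by
      intro x
      by_cases hx : π x = q
      · rw [if_pos hx, multCount_cons]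
        exact Finset.sum_congr rfl fun a _ => by by_cases ha : a ∈ p.1 <;> simp [ha, hx]
      · rw [if_neg hx]
        symm
        exact Finset.sum_eq_zero fun a _ => by simp [hx]
    rw [Finset.sum_congr rfl fun x _ => stepA x, Finset.sum_comm]
    -- now : ∑ a, ∑ x, ite (a ∈ p.1 ∧ π x = q) (mc rest (a⁻¹x)) 0
    have stepB : ∀ a : G, (∑ x : G, if a ∈ p.1 ∧ π x = q then
          multCount (P'.map fun p => SetLike.coe p.1) (a⁻¹ * x) else 0)
        = if a ∈ p.1 then D * multCount (P'.map fun p => SetLike.coe p.2) ((π a)⁻¹ * q)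
          else 0 := by
      intro a
      by_cases ha : a ∈ p.1
      · rw [if_pos ha, ← ih' ((π a)⁻¹ * q)]
        refine Fintype.sum_equiv (Equiv.mulLeft a⁻¹) _ _ fun x => ?_
        simp only [Equiv.coe_mulLeft, ha, true_and]
        have : π (a⁻¹ * x) = (π a)⁻¹ * q ↔ π x = q := by
          rw [map_mul, map_inv]
          constructor
          · intro h
            have := congrArg (π a * ·) h
            simpa [mul_assoc] using this
          · intro h; rw [h]
        by_cases hx : π x = q
        · rw [if_pos hx]; exact (if_pos (this.mpr hx)).symm
        · rw [if_neg hx]; exact (if_neg (fun hh => hx (this.mp hh))).symm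
      · rw [if_neg ha]
        exact Finset.sum_eq_zero fun x _ => by simp [ha]
    rw [Finset.sum_congr rfl fun a _ => stepB a]
    -- group a by π a
    have stepC : ∀ a : G, (if a ∈ p.1 then
          D * multCount (P'.map fun p => SetLike.coe p.2) ((π a)⁻¹ * q) else 0)
        = ∑ b : Q, if a ∈ p.1 ∧ π a = b then
            D * multCount (P'.map fun p => SetLike.coe p.2) (b⁻¹ * q) else 0 := by
      intro a
      by_cases ha : a ∈ p.1
      · rw [if_pos ha]
        have : ∀ b : Q, (if a ∈ p.1 ∧ π a = b then
              D * multCount (P'.map fun p => SetLike.coe p.2) (b⁻¹ * q) else 0)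
            = if π a = b then
              D * multCount (P'.map fun p => SetLike.coe p.2) (b⁻¹ * q) else 0 := by
          intro b; by_cases hb : π a = b <;> simp [ha, hb]
        rw [Finset.sum_congr rfl fun b _ => this b,
          Finset.sum_ite_eq Finset.univ (π a)
            (fun b => D * multCount (P'.map fun p => SetLike.coe p.2) (b⁻¹ * q))]
        simp
      · rw [if_neg ha]
        symm
        exact Finset.sum_eq_zero fun b _ => by simp [ha]
    rw [Finset.sum_congr rfl fun a _ => stepC a, Finset.sum_comm]
    -- inner sum over a is fiber count
    have stepD : ∀ b : Q, (∑ a : G, if a ∈ p.1 ∧ π a = b then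
          D * multCount (P'.map fun p => SetLike.coe p.2) (b⁻¹ * q) else 0)
        = (if b ∈ p.2 then d else 0) *
          (D * multCount (P'.map fun p => SetLike.coe p.2) (b⁻¹ * q)) := by
      intro b
      rw [sum_ite_count (fun a : G => a ∈ p.1 ∧ π a = b)]
      by_cases hb : b ∈ p.2
      · rw [if_pos hb, hfib1 b hb]
      · rw [if_neg hb]
        have : IsEmpty {x : G // x ∈ p.1 ∧ π x = b} :=
          ⟨fun x => hb (x.2.2 ▸ hmem1 x.1 x.2.1)⟩
        rw [Nat.card_of_isEmpty]
    rw [Finset.sum_congr rfl fun b _ => stepD b, multCount_cons]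
    rw [Finset.mul_sum]
    refine Finset.sum_congr rfl fun b _ => ?_
    by_cases hb : b ∈ p.2 <;> simp [hb] <;> ring

noncomputable section Bridge


lemma ofFn_coe_eq_map (k : ℕ) (H : Fin k → Subgroup G) :
    (List.ofFn fun i => (H i : Set G)) = (List.ofFn H).map SetLike.coe := by
  rw [List.map_ofFn]
  rfl

lemma admitsUCF_of_list (LL : List (Subgroup G)) (t : ℕ) (hne : LL ≠ []) (ht : 0 < t)
    (hcyc : ∀ K ∈ LL, IsCyclic K) (hu : ∀ g : G, multCount (LL.map SetLike.coe) g = t) :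
    AdmitsUCF G := by
  refine ⟨LL.length, LL.get, t, ?_, ht, ?_, ?_⟩
  · exact List.length_pos_iff.mpr hne
  · intro i; exact hcyc _ (by exact List.getElem_mem i.isLt)
  · intro g
    rw [ofFn_coe_eq_map, List.ofFn_get]
    exact hu g

lemma list_of_admitsUCF (h : AdmitsUCF G) :
    ∃ (LL : List (Subgroup G)) (t : ℕ), LL ≠ [] ∧ 0 < t ∧ (∀ K ∈ LL, IsCyclic K) ∧
      ∀ g : G, multCount (LL.map SetLike.coe) g = t := by
  obtain ⟨k, H, t, hk, ht, hcyc, hu⟩ := h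
  refine ⟨List.ofFn H, t, ?_, ht, ?_, ?_⟩
  · intro hnil
    have := List.length_ofFn (f := H) ▸ congrArg List.length hnil
    simp at this; omega
  · intro K hK
    obtain ⟨i, rfl⟩ := List.mem_ofFn.mp hK
    exact hcyc i
  · intro g
    rw [← ofFn_coe_eq_map]
    exact hu g

lemma list_of_admitsProperUGF (h : AdmitsProperUGF G) :
    ∃ (LL : List (Subgroup G)) (t : ℕ), LL ≠ [] ∧ 0 < t ∧ (∀ K ∈ LL, K ≠ ⊤) ∧
      ∀ g : G, multCount (LL.map SetLike.coe) g = t := by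
  obtain ⟨k, H, t, hk, ht, hpr, hu⟩ := h
  refine ⟨List.ofFn H, t, ?_, ht, ?_, ?_⟩
  · intro hnil
    have := List.length_ofFn (f := H) ▸ congrArg List.length hnil
    simp at this; omega
  · intro K hK
    obtain ⟨i, rfl⟩ := List.mem_ofFn.mp hK
    exact hpr i
  · intro g
    rw [← ofFn_coe_eq_map]
    exact hu g

lemma isCyclic_zpowers (g : G) : IsCyclic (Subgroup.zpowers g) := by
  refine ⟨⟨⟨g, Subgroup.mem_zpowers g⟩, ?_⟩⟩
  rintro ⟨x, hx⟩
  obtain ⟨n, rfl⟩ := Subgroup.mem_zpowers_iff.mp hx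
  exact ⟨n, Subtype.ext (by push_cast; rfl)⟩

lemma exists_zpowers_eq (K : Subgroup G) [hK : IsCyclic K] :
    ∃ g : G, Subgroup.zpowers g = K := by
  obtain ⟨⟨g, hgK⟩, hgen⟩ := hK.exists_generator
  refine ⟨g, le_antisymm ?_ ?_⟩
  · rw [Subgroup.zpowers_le]; exact hgK
  · intro x hx
    obtain ⟨n, hn⟩ := hgen ⟨x, hx⟩
    refine Subgroup.mem_zpowers_iff.mpr ⟨n, ?_⟩
    have := congrArg (Subtype.val) hn
    push_cast at this
    exact this

lemma isCyclic_top_iff : IsCyclic ((⊤ : Subgroup G) : Type _) ↔ IsCyclic G := by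
  constructor
  · intro h; exact isCyclic_of_surjective Subgroup.topEquiv.toMonoidHom
      Subgroup.topEquiv.surjective
  · intro h; exact isCyclic_of_surjective Subgroup.topEquiv.symm.toMonoidHom
      Subgroup.topEquiv.symm.surjective

lemma card_lt_of_ne_top [Finite G] (K : Subgroup G) (hK : K ≠ ⊤) :
    Nat.card K < Nat.card G := by
  refine lt_of_le_of_ne (Subgroup.card_le_card_group K) fun h => hK ?_
  exact Subgroup.eq_top_of_card_eq K h

end Bridge

section Proj
variable {Q : Type*} [Group Q]

lemma map_mem_zpowers (π : G →* Q) (g₀ : G) {x : G} (hx : x ∈ Subgroup.zpowers g₀) :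
    π x ∈ Subgroup.zpowers (π g₀) := by
  obtain ⟨n, rfl⟩ := Subgroup.mem_zpowers_iff.mp hx
  exact Subgroup.mem_zpowers_iff.mpr ⟨n, (map_zpow π g₀ n).symm⟩

lemma fib_zpowers_const (π : G →* Q) (g₀ : G)
    (b : Q) (hb : b ∈ Subgroup.zpowers (π g₀)) :
    Nat.card {x : G // x ∈ Subgroup.zpowers g₀ ∧ π x = b}
      = Nat.card {x : G // x ∈ Subgroup.zpowers g₀ ∧ π x = 1} := by
  obtain ⟨n, hn⟩ := Subgroup.mem_zpowers_iff.mp hb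
  have hx₀mem : g₀ ^ n ∈ Subgroup.zpowers g₀ :=
    Subgroup.zpow_mem _ (Subgroup.mem_zpowers g₀) n
  have hπx₀ : π (g₀ ^ n) = b := by rw [map_zpow, hn]
  apply Nat.card_congr
  refine ⟨fun x => ⟨(g₀ ^ n)⁻¹ * x.1, mul_mem (inv_mem hx₀mem) x.2.1, ?_⟩,
    fun y => ⟨(g₀ ^ n) * y.1, mul_mem hx₀mem y.2.1, ?_⟩, fun x => ?_, fun y => ?_⟩
  · rw [map_mul, map_inv, hπx₀, x.2.2, inv_mul_cancel]
  · rw [map_mul, hπx₀, y.2.2, mul_one]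
  · exact Subtype.ext (by simp)
  · exact Subtype.ext (by simp)
end Proj

section Main


open Classical in
lemma cyclic_admitsUCF (G : Type) [Group G] [Finite G] (hc : IsCyclic G) : AdmitsUCF G := by
  cases nonempty_fintype G
  refine admitsUCF_of_list [⊤] 1 (by simp) one_pos ?_ ?_
  · intro K hK
    rw [List.mem_singleton] at hK
    subst hK
    exact isCyclic_top_iff.mpr hc
  · intro g
    have : ([⊤] : List (Subgroup G)).map SetLike.coe = [((⊤ : Subgroup G) : Set G)] := rfl
    rw [this, multCount_singleton]
    simp

open Classical in
lemma three_implies_one (n : ℕ)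
    (h3 : ∀ (G : Type) [Group G] [Finite G], Nat.card G ≤ n → IsSimpleGroup G →
      ¬ IsCyclicOfPrimePowerOrder G → AdmitsProperUGF G) :
    ∀ (G : Type) [Group G] [Finite G], Nat.card G ≤ n → AdmitsUCF G := by
  suffices h : ∀ (m : ℕ) (G : Type) [Group G] [Finite G],
      Nat.card G ≤ n → Nat.card G = m → AdmitsUCF G by
    intro G _ _ hGn; exact h (Nat.card G) G hGn rfl
  intro m
  induction m using Nat.strong_induction_on with
  | _ m ih =>
  intro G _ _ hGn hGm
  cases nonempty_fintype G
  by_cases hcyc : IsCyclic G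
  · exact cyclic_admitsUCF G hcyc
  -- the key consequence of the induction hypothesis
  have hsub : ∀ K : Subgroup G, K ≠ ⊤ → ∃ pr : List (Subgroup G) × ℕ,
      pr.1 ≠ [] ∧ 0 < pr.2 ∧ (∀ C ∈ pr.1, IsCyclic C) ∧
      ∀ x : G, multCount (pr.1.map SetLike.coe) x = if x ∈ K then pr.2 else 0 := by
    intro K hK
    have hKm : Nat.card K < m := hGm ▸ card_lt_of_ne_top K hK
    have hKn : Nat.card K ≤ n := le_trans (Subgroup.card_le_card_group K) hGn
    obtain ⟨LLK, tK, hne, htK, hcycK, huK⟩ :=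
      list_of_admitsUCF (ih (Nat.card K) hKm K hKn rfl)
    refine ⟨(LLK.map (Subgroup.map K.subtype), tK), ?_, htK, ?_, ?_⟩
    · simpa using hne
    · intro C hC
      simp only [List.mem_map] at hC
      obtain ⟨C', hC', rfl⟩ := hC
      haveI := hcycK C' hC'
      exact isCyclic_of_surjective (C'.equivMapOfInjective K.subtype K.subtype_injective)
        (C'.equivMapOfInjective K.subtype K.subtype_injective).surjective
    · intro x
      exact multCount_mapped_subgroup K LLK tK huK x
  -- choice function for proper subgroups
  set f : Subgroup G → List (Subgroup G) × ℕ := fun K =>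
    if h : K ≠ ⊤ then (hsub K h).choose else ([], 0) with hf_def
  have hf : ∀ K : Subgroup G, K ≠ ⊤ → (f K).1 ≠ [] ∧ 0 < (f K).2 ∧
      (∀ C ∈ (f K).1, IsCyclic C) ∧
      ∀ x : G, multCount ((f K).1.map SetLike.coe) x = if x ∈ K then (f K).2 else 0 := by
    intro K hK
    rw [hf_def]
    simp only [dif_pos hK]
    exact (hsub K hK).choose_spec
  by_cases hsimp : IsSimpleGroup G
  · -- simple case : use h3 and compose
    have hncpp : ¬ IsCyclicOfPrimePowerOrder G := fun h => hcyc h.1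
    obtain ⟨LL, t, hne, ht, hproper, hu⟩ := list_of_admitsProperUGF (h3 G hGn hsimp hncpp)
    set P : List (Set G × List (Set G) × ℕ) :=
      LL.map fun K => (SetLike.coe K, ((f K).1.map SetLike.coe), (f K).2) with hP_def
    have hP : ∀ p ∈ P, ∀ x : G, multCount p.2.1 x = if x ∈ p.1 then p.2.2 else 0 := by
      intro p hp x
      rw [hP_def] at hp
      simp only [List.mem_map] at hp
      obtain ⟨K, hK, rfl⟩ := hp
      simp only [SetLike.mem_coe]
      exact (hf K (hproper K hK)).2.2.2 x
    have hjoin := multCount_join P hP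
    refine admitsUCF_of_list ((LL.map fun K => (f K).1).flatten)
      ((LL.map fun K => (f K).2).prod * t) ?_ ?_ ?_ ?_
    · obtain ⟨K0, LL0, rfl⟩ := List.exists_cons_of_ne_nil hne
      simp only [List.map_cons, List.flatten_cons]
      intro hnil
      exact (hf K0 (hproper K0 (List.mem_cons_self))).1 (List.append_eq_nil_iff.mp hnil).1
    · refine Nat.mul_pos ?_ ht
      refine List.prod_pos fun a ha => ?_
      simp only [List.mem_map] at ha
      obtain ⟨K, hK, rfl⟩ := ha
      exact (hf K (hproper K hK)).2.1
    · intro C hC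
      rw [List.mem_flatten] at hC
      obtain ⟨l, hl, hCl⟩ := hC
      simp only [List.mem_map] at hl
      obtain ⟨K, hK, rfl⟩ := hl
      exact (hf K (hproper K hK)).2.2.1 C hCl
    · intro g
      have e1 : ((LL.map fun K => (f K).1).flatten).map SetLike.coe
          = (P.map fun p => p.2.1).flatten := by
        rw [List.map_flatten, List.map_map, hP_def, List.map_map]
        rfl
      have e2 : (P.map fun p => p.2.2) = LL.map fun K => (f K).2 := by
        rw [hP_def, List.map_map]
        rfl
      have e3 : (P.map fun p => p.1) = LL.map SetLike.coe := by
        rw [hP_def, List.map_map]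
        rfl
      rw [e1, hjoin g, e2, e3, hu g]
  · -- non-simple case : quotient construction
    have hnt : Nontrivial G := by
      by_contra hnt
      have : Subsingleton G := not_nontrivial_iff_subsingleton.mp hnt
      exact hcyc (isCyclic_of_subsingleton)
    obtain ⟨N, hNnorm, hNbot, hNtop⟩ :
        ∃ N : Subgroup G, N.Normal ∧ N ≠ ⊥ ∧ N ≠ ⊤ := by
      by_contra hcon
      push_neg at hcon
      exact hsimp ⟨fun N hN => by
        by_cases hb : N = ⊥
        · exact Or.inl hb
        · exact Or.inr (hcon N hN hb)⟩
    haveI := hNnorm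
    set Q := G ⧸ N with hQdef
    cases nonempty_fintype Q
    have hcardN : 1 < Nat.card N := by
      have h0 : Nat.card N ≠ 1 := fun h => hNbot (Subgroup.card_eq_one.mp h)
      have h1 : 0 < Nat.card N := Nat.card_pos
      omega
    have hqle : Nat.card Q ≤ Nat.card G := by
      rw [Subgroup.card_eq_card_quotient_mul_card_subgroup N]
      exact Nat.le_mul_of_pos_right _ Nat.card_pos
    have hcardQ : Nat.card Q < m := by
      have hq := Subgroup.card_eq_card_quotient_mul_card_subgroup N
      have hq1 : 0 < Nat.card Q := Nat.card_pos
      rw [hGm] at hq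
      nlinarith
    have hcardQn : Nat.card Q ≤ n := le_trans hqle hGn
    obtain ⟨LLQ, tQ, hneQ, htQ, hcycQ, huQ⟩ :=
      list_of_admitsUCF (ih (Nat.card Q) hcardQ Q hcardQn rfl)
    set π : G →* Q := QuotientGroup.mk' N with hπdef
    -- choose lifted generators
    have hlift : ∀ K : Subgroup Q, K ∈ LLQ → ∃ g : G, Subgroup.zpowers (π g) = K := by
      intro K hK
      haveI := hcycQ K hK
      obtain ⟨q, hq⟩ := exists_zpowers_eq K
      obtain ⟨g, hg⟩ := QuotientGroup.mk'_surjective N q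
      exact ⟨g, by rw [hg, hq]⟩
    set fq : Subgroup Q → G := fun K =>
      if h : K ∈ LLQ then (hlift K h).choose else 1 with hfqdef
    have hfq : ∀ K ∈ LLQ, Subgroup.zpowers (π (fq K)) = K := by
      intro K hK
      rw [hfqdef]
      simp only [dif_pos hK]
      exact (hlift K hK).choose_spec
    set P : List (Subgroup G × Subgroup Q) :=
      LLQ.map fun K => (Subgroup.zpowers (fq K), K) with hPdef
    have hmem : ∀ p ∈ P, ∀ x : G, x ∈ p.1 → π x ∈ p.2 := by
      intro p hp x hx
      rw [hPdef] at hp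
      simp only [List.mem_map] at hp
      obtain ⟨K, hK, rfl⟩ := hp
      rw [← hfq K hK]
      exact map_mem_zpowers π (fq K) hx
    have hfib : ∀ p ∈ P, ∀ b : Q, b ∈ p.2 →
        Nat.card {x : G // x ∈ p.1 ∧ π x = b}
          = Nat.card {x : G // x ∈ p.1 ∧ π x = 1} := by
      intro p hp b hb
      rw [hPdef] at hp
      simp only [List.mem_map] at hp
      obtain ⟨K, hK, rfl⟩ := hp
      exact fib_zpowers_const π (fq K) b (by rw [hfq K hK]; exact hb)
    have hproj := proj_sum π P hmem hfib
    set D : ℕ := (P.map fun p =>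
      Nat.card {x : G // x ∈ p.1 ∧ π x = 1}).prod with hDdef
    have hDpos : 0 < D := by
      rw [hDdef]
      refine List.prod_pos fun a ha => ?_
      simp only [List.mem_map] at ha
      obtain ⟨p, hp, rfl⟩ := ha
      haveI : Nonempty {x : G // x ∈ p.1 ∧ π x = 1} := ⟨⟨1, Subgroup.one_mem _, map_one π⟩⟩
      exact Nat.card_pos
    -- factorization of G as (zpowers lifts) ++ [N]
    have hfact : ∀ g : G, multCount ((P.map fun p => SetLike.coe p.1) ++ [SetLike.coe N]) g
        = D * tQ := by
      intro g
      rw [multCount_append]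
      have step : ∀ x : G, multCount (P.map fun p => SetLike.coe p.1) x
          * multCount [SetLike.coe N] (x⁻¹ * g)
          = @ite _ (π x = π g) (Classical.propDecidable _)
              (multCount (P.map fun p => SetLike.coe p.1) x) 0 := by
        intro x
        rw [multCount_singleton]
        have : (x⁻¹ * g ∈ SetLike.coe N) ↔ (π x = π g) := by
          rw [SetLike.mem_coe, hπdef]
          constructor
          · intro h
            exact (QuotientGroup.eq (s := N)).mpr h
          · intro h
            exact (QuotientGroup.eq (s := N)).mp h
        by_cases hx : π x = π g
        · rw [if_pos (this.mpr hx), if_pos hx, mul_one]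
        · rw [if_neg (fun hh => hx (this.mp hh)), if_neg hx, mul_zero]
      rw [Finset.sum_congr rfl fun x _ => step x, hproj (π g)]
      have : (P.map fun p => SetLike.coe p.2) = LLQ.map SetLike.coe := by
        rw [hPdef, List.map_map]
        rfl
      rw [this, huQ (π g)]
    -- now replace N by its mapped cyclic factorization
    have hNdata := hf N hNtop
    have hcomp := multCount_comp (P.map fun p => SetLike.coe p.1) ([] : List (Set G))
      ((f N).1.map SetLike.coe) (SetLike.coe N) (f N).2
      (fun x => by rw [(hNdata.2.2.2) x]; simp only [SetLike.mem_coe]) 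
    refine admitsUCF_of_list ((LLQ.map fun K => Subgroup.zpowers (fq K)) ++ (f N).1)
      ((f N).2 * (D * tQ)) ?_ ?_ ?_ ?_
    · intro hnil
      rcases List.append_eq_nil_iff.mp hnil with ⟨h1, h2⟩
      exact hNdata.1 h2
    · exact Nat.mul_pos hNdata.2.1 (Nat.mul_pos hDpos htQ)
    · intro C hC
      rcases List.mem_append.mp hC with hC | hC
      · simp only [List.mem_map] at hC
        obtain ⟨K, hK, rfl⟩ := hC
        exact isCyclic_zpowers _
      · exact hNdata.2.2.1 C hC
    · intro g
      have e1 : (((LLQ.map fun K => Subgroup.zpowers (fq K)) ++ (f N).1).map SetLike.coe)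
          = (P.map fun p => SetLike.coe p.1) ++ (((f N).1.map SetLike.coe) ++ []) := by
        simp only [List.map_append, List.append_nil, hPdef, List.map_map]
        rfl
      rw [e1, hcomp g]
      have e2 : ((P.map fun p => SetLike.coe p.1) ++ (SetLike.coe N : Set G) :: ([] : List (Set G)))
          = (P.map fun p => SetLike.coe p.1) ++ [SetLike.coe N] := rfl
      rw [e2, hfact g]

end Main

section OneTwo

lemma admitsProperUGF_of_list (LL : List (Subgroup G)) (t : ℕ) (hne : LL ≠ []) (ht : 0 < t)
    (hpr : ∀ K ∈ LL, K ≠ ⊤) (hu : ∀ g : G, multCount (LL.map SetLike.coe) g = t) :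
    AdmitsProperUGF G := by
  refine ⟨LL.length, LL.get, t, ?_, ht, ?_, ?_⟩
  · exact List.length_pos_iff.mpr hne
  · intro i; exact hpr _ (by exact List.getElem_mem i.isLt)
  · intro g
    rw [ofFn_coe_eq_map, List.ofFn_get]
    exact hu g

open Classical in
lemma cyclic_proper_ugf (G : Type) [Group G] [Finite G] (hc : IsCyclic G)
    (hnpp : ¬ ∃ p r : ℕ, p.Prime ∧ Nat.card G = p ^ r) : AdmitsProperUGF G := by
  cases nonempty_fintype G
  set m := Nat.card G with hm
  have hm0 : 0 < m := Nat.card_pos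
  have hm1 : m ≠ 1 := fun h => hnpp ⟨2, 0, Nat.prime_two, by simp [h]⟩
  set p := m.minFac with hpdef
  have hp : p.Prime := Nat.minFac_prime hm1
  set e := m.factorization p with hedef
  have he : 0 < e := Nat.Prime.factorization_pos_of_dvd hp (by omega) (Nat.minFac_dvd m)
  set a := p ^ e with hadef
  have hadvd : a ∣ m := Nat.ordProj_dvd m p
  set b := m / a with hbdef
  have hab : a * b = m := Nat.mul_div_cancel' hadvd
  have hcop : Nat.Coprime a b := Nat.Coprime.pow_left e (Nat.coprime_ordCompl hp (by omega))
  have ha1 : 1 < a := Nat.one_lt_pow he.ne' hp.one_lt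
  clear_value p e a b
  have hb0 : b ≠ 0 := by intro h; rw [h, mul_zero] at hab; omega
  have hb1 : 1 < b := by
    rcases Nat.lt_or_ge 1 b with h | h
    · exact h
    · exfalso
      have : b = 1 := by omega
      rw [this, mul_one] at hab
      exact hnpp ⟨p, e, hp, by rw [← hab]; exact hadef⟩
  have ham : a < m := by nlinarith
  have hbm : b < m := by nlinarith
  obtain ⟨g, hg⟩ := hc.exists_generator
  have hog : orderOf g = m := orderOf_eq_card_of_forall_mem_zpowers hg
  have horder1 : orderOf (g ^ b) = a := by
    rw [orderOf_pow, hog]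
    have hgcd : Nat.gcd m b = b := by
      rw [Nat.gcd_comm]
      exact Nat.gcd_eq_left ⟨a, by rw [← hab, mul_comm]⟩
    rw [hgcd, ← hab, Nat.mul_div_cancel a (by omega)]
  have horder2 : orderOf (g ^ a) = b := by
    rw [orderOf_pow, hog]
    have hgcd : Nat.gcd m a = a := by
      rw [Nat.gcd_comm]
      exact Nat.gcd_eq_left hadvd
    rw [hgcd]
    exact hbdef.symm
  set H₁ := Subgroup.zpowers (g ^ b) with hH₁
  set H₂ := Subgroup.zpowers (g ^ a) with hH₂
  have hH₁top : H₁ ≠ ⊤ := by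
    intro h
    have hcard : Nat.card H₁ = a := by rw [hH₁, Nat.card_zpowers, horder1]
    rw [h, Subgroup.card_top, ← hm] at hcard
    omega
  have hH₂top : H₂ ≠ ⊤ := by
    intro h
    have hcard : Nat.card H₂ = b := by rw [hH₂, Nat.card_zpowers, horder2]
    rw [h, Subgroup.card_top, ← hm] at hcard
    omega
  -- unique decomposition
  have hdecomp : ∀ g' : G, ∃! x : G, x ∈ H₁ ∧ x⁻¹ * g' ∈ H₂ := by
    intro g'
    obtain ⟨s, hs⟩ := Subgroup.mem_zpowers_iff.mp (hg g')
    obtain ⟨u, v, huv⟩ : IsCoprime (a : ℤ) (b : ℤ) := Nat.isCoprime_iff_coprime.mpr hcop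
    refine ⟨(g ^ b) ^ (v * s), ⟨Subgroup.zpow_mem _ (Subgroup.mem_zpowers _) _, ?_⟩, ?_⟩
    · have hx : ((g ^ b) ^ (v * s))⁻¹ * g' = (g ^ a) ^ (u * s) := by
        rw [← hs, ← zpow_natCast g b, ← zpow_natCast g a, ← zpow_mul, ← zpow_mul,
          ← zpow_neg, ← zpow_add]
        congr 1
        linear_combination (-s) * huv
      rw [hx]
      exact Subgroup.zpow_mem _ (Subgroup.mem_zpowers _) _
    · rintro y ⟨hy1, hy2⟩
      have hmem1 : y⁻¹ * (g ^ b) ^ (v * s) ∈ H₁ :=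
        mul_mem (inv_mem hy1) (Subgroup.zpow_mem _ (Subgroup.mem_zpowers _) _)
      have hx₀H₂ : ((g ^ b) ^ (v * s))⁻¹ * g' ∈ H₂ := by
        have hx : ((g ^ b) ^ (v * s))⁻¹ * g' = (g ^ a) ^ (u * s) := by
          rw [← hs, ← zpow_natCast g b, ← zpow_natCast g a, ← zpow_mul, ← zpow_mul,
            ← zpow_neg, ← zpow_add]
          congr 1
          linear_combination (-s) * huv
        rw [hx]
        exact Subgroup.zpow_mem _ (Subgroup.mem_zpowers _) _
      have hmem2 : y⁻¹ * (g ^ b) ^ (v * s) ∈ H₂ := by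
        have heq : y⁻¹ * (g ^ b) ^ (v * s)
            = (y⁻¹ * g') * (((g ^ b) ^ (v * s))⁻¹ * g')⁻¹ := by group
        rw [heq]
        exact mul_mem hy2 (inv_mem hx₀H₂)
      have hdvd1 : orderOf (y⁻¹ * (g ^ b) ^ (v * s)) ∣ a := by
        have h' := orderOf_dvd_of_mem_zpowers hmem1
        rwa [horder1] at h'
      have hdvd2 : orderOf (y⁻¹ * (g ^ b) ^ (v * s)) ∣ b := by
        have h' := orderOf_dvd_of_mem_zpowers hmem2
        rwa [horder2] at h' 
      have : orderOf (y⁻¹ * (g ^ b) ^ (v * s)) = 1 :=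
        Nat.eq_one_of_dvd_coprimes hcop hdvd1 hdvd2
      have h1 : y⁻¹ * (g ^ b) ^ (v * s) = 1 := orderOf_eq_one_iff.mp this
      have := congrArg (y * ·) h1
      simpa [mul_assoc] using this.symm
  -- compute the multiplication count
  have hmc : ∀ g' : G, multCount ([H₁, H₂].map SetLike.coe) g' = 1 := by
    intro g'
    have : ([H₁, H₂].map SetLike.coe)
        = (SetLike.coe H₁) :: [SetLike.coe H₂] := rfl
    rw [this, multCount_cons]
    have step : ∀ x : G, (if x ∈ SetLike.coe H₁ then multCount [SetLike.coe H₂] (x⁻¹ * g') else 0)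
        = if (x ∈ H₁ ∧ x⁻¹ * g' ∈ H₂) then 1 else 0 := by
      intro x
      rw [multCount_singleton]
      by_cases h1 : x ∈ H₁ <;> by_cases h2 : x⁻¹ * g' ∈ H₂ <;>
        simp [h1, h2]
    rw [Finset.sum_congr rfl fun x _ => step x,
      sum_ite_count (fun x : G => x ∈ H₁ ∧ x⁻¹ * g' ∈ H₂)]
    obtain ⟨x₀, hx₀, huniq⟩ := hdecomp g'
    haveI : Unique {x : G // x ∈ H₁ ∧ x⁻¹ * g' ∈ H₂} :=
      ⟨⟨⟨x₀, hx₀⟩⟩, fun y => Subtype.ext (huniq y.1 y.2)⟩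
    rw [Nat.card_unique, mul_one]
  exact admitsProperUGF_of_list [H₁, H₂] 1 (by simp) one_pos
    (by intro K hK
        simp only [List.mem_cons, List.mem_singleton, List.not_mem_nil, or_false] at hK
        rcases hK with rfl | rfl
        · exact hH₁top
        · exact hH₂top) hmc

lemma one_implies_two (n : ℕ)
    (h1 : ∀ (G : Type) [Group G] [Finite G], Nat.card G ≤ n → AdmitsUCF G) :
    ∀ (G : Type) [Group G] [Finite G], Nat.card G ≤ n →
      ¬ IsCyclicOfPrimePowerOrder G → AdmitsProperUGF G := by
  intro G _ _ hGn hncpp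
  by_cases hc : IsCyclic G
  · refine cyclic_proper_ugf G hc fun ⟨p, r, hp, hcard⟩ => hncpp ⟨hc, p, r, hp, hcard⟩
  · obtain ⟨k, H, t, hk, ht, hcyc, hu⟩ := h1 G hGn
    refine ⟨k, H, t, hk, ht, ?_, hu⟩
    intro i hi
    haveI := hcyc i
    rw [hi] at this
    exact hc (isCyclic_top_iff.mp this)

end OneTwo


/-- Equivalence of the three conditions on groups of order at most `n`. -/
theorem ucf_tfae (n : ℕ) (hn : 1 ≤ n) :
    List.TFAE
      [∀ (G : Type) [Group G] [Finite G], Nat.card G ≤ n → AdmitsUCF G,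
       ∀ (G : Type) [Group G] [Finite G], Nat.card G ≤ n →
         ¬ IsCyclicOfPrimePowerOrder G → AdmitsProperUGF G,
       ∀ (G : Type) [Group G] [Finite G], Nat.card G ≤ n → IsSimpleGroup G →
         ¬ IsCyclicOfPrimePowerOrder G → AdmitsProperUGF G] := by
  tfae_have 1 → 2 := fun h1 => one_implies_two n h1
  tfae_have 2 → 3 := fun h2 G _ _ hGn _ hncpp => h2 G hGn hncpp
  tfae_have 3 → 1 := fun h3 => three_implies_one n h3
  tfae_finish
end

section
/- Let G be a finite group, N a proper normal subgroup of G, and π : G → G/N the canonical surjection. Let H_1, …, H_k be subgroups of G. If (π(H_1), π(H_2), …, π(H_k)) is a uniform group factorization of the quotient group G/N, then (H_1, H_2, …, H_k, N) is a uniform group factorization of G. Moreover, if each π(H_i) is a proper subgroup of G/N, then each of H_1, …, H_k, N is a proper subgroup of G, so the resulting uniform group factorization of G is proper. -/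
lemma forall₂_ofFn_iff {α β : Type*} {R : α → β → Prop} :
    ∀ {k : ℕ} {a : Fin k → α} {b : Fin k → β},
      List.Forall₂ R (List.ofFn a) (List.ofFn b) ↔ ∀ i, R (a i) (b i)
  | 0, a, b => by simp
  | (k+1), a, b => by
    simp [List.ofFn_succ, List.forall₂_cons, forall₂_ofFn_iff, Fin.forall_fin_succ,
      Function.comp]

lemma exists_tuple_of_forall₂ {G : Type*} :
    ∀ {k : ℕ} {f : Fin k → Set G} {h : List G},
      List.Forall₂ (· ∈ ·) h (List.ofFn f) →
      ∃ a : ∀ i, f i, List.ofFn (fun i => (a i : G)) = h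
  | 0, f, h, hf => by
    rw [List.ofFn_zero, List.forall₂_nil_right_iff] at hf
    exact ⟨fun i => i.elim0, by simp [hf]⟩
  | (k+1), f, h, hf => by
    rw [List.ofFn_succ, List.forall₂_cons_right_iff] at hf
    obtain ⟨x, h', hx, hf', rfl⟩ := hf
    obtain ⟨a', ha'⟩ := exists_tuple_of_forall₂ hf'
    refine ⟨fun i => Fin.cases ⟨x, hx⟩ a' i, ?_⟩
    simp only [List.ofFn_succ, Fin.cases_zero, Fin.cases_succ]
    rw [List.cons_inj_right]
    exact ha'

lemma multCount_ofFn {G : Type*} [Group G] {k : ℕ} (f : Fin k → Set G) (g : G) :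
    multCount (List.ofFn f) g =
      Nat.card {a : ∀ i, f i // (List.ofFn fun i => (a i : G)).prod = g} := by
  refine (Nat.card_congr (Equiv.ofBijective
    (fun a => ⟨List.ofFn fun i => (a.1 i : G),
      forall₂_ofFn_iff.2 fun i => (a.1 i).2, a.2⟩) ⟨?_, ?_⟩)).symm
  · rintro ⟨a, ha⟩ ⟨b, hb⟩ hab
    simp only [Subtype.mk.injEq, List.ofFn_inj] at hab
    exact Subtype.ext (funext fun i => Subtype.ext (congrFun hab i))
  · rintro ⟨h, hf, hp⟩
    obtain ⟨a, ha⟩ := exists_tuple_of_forall₂ hf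
    exact ⟨⟨a, by rw [ha]; exact hp⟩, by simpa using ha⟩

lemma multCount_ofFn_append {G : Type*} [Group G] {k : ℕ} (f : Fin k → Set G) (s : Set G)
    (g : G) :
    multCount (List.ofFn f ++ [s]) g =
      Nat.card {p : (∀ i, f i) × s //
        (List.ofFn fun i => (p.1 i : G)).prod * (p.2 : G) = g} := by
  refine (Nat.card_congr (Equiv.ofBijective
    (fun p => ⟨(List.ofFn fun i => (p.1.1 i : G)) ++ [(p.1.2 : G)],
      List.rel_append ((forall₂_ofFn_iff (R := fun (x : G) (t : Set G) => x ∈ t)).2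
          fun i => (p.1.1 i).2)
        (List.Forall₂.cons p.1.2.2 List.Forall₂.nil),
      by simpa using p.2⟩) ⟨?_, ?_⟩)).symm
  · rintro ⟨⟨a, x⟩, ha⟩ ⟨⟨b, y⟩, hb⟩ hab
    simp only [Subtype.mk.injEq] at hab
    obtain ⟨h1, h2⟩ := List.append_inj hab (by simp)
    rw [List.ofFn_inj] at h1
    simp only [List.cons.injEq] at h2
    exact Subtype.ext (Prod.ext (funext fun i => Subtype.ext (congrFun h1 i))
      (Subtype.ext h2.1))
  · rintro ⟨h, hf, hp⟩
    have h1 := List.forall₂_take_append h (List.ofFn f) [s] hf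
    have h2 := List.forall₂_drop_append h (List.ofFn f) [s] hf
    obtain ⟨a, ha⟩ := exists_tuple_of_forall₂ h1
    rw [List.forall₂_cons_right_iff] at h2
    obtain ⟨x, l', hx, hl', hdrop⟩ := h2
    rw [List.forall₂_nil_right_iff] at hl'
    subst hl'
    have hsplit : h = h.take (List.ofFn f).length ++ h.drop (List.ofFn f).length :=
      (List.take_append_drop _ h).symm
    refine ⟨⟨(a, ⟨x, hx⟩), ?_⟩, ?_⟩
    · rw [ha]
      rw [hsplit, hdrop] at hp
      simpa using hp
    · refine Subtype.ext ?_
      simp only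
      rw [ha, ← hdrop]
      exact hsplit.symm

/-- If `N` is a proper normal subgroup of `G`, `H 1, …, H k` are subgroups of `G`, and
`(π(H 1), …, π(H k))` is a uniform group factorization of `G / N` (where `π` is the
canonical projection), then `(H 1, …, H k, N)` is a uniform group factorization of `G`;
moreover, if each `π(H i)` is proper in `G / N`, then each `H i` and `N` are proper
in `G`, so the factorization is proper. -/
theorem uniform_group_factorization_of_quotient
    {G : Type*} [Group G] [Finite G] (N : Subgroup G) [N.Normal] (hN : N ≠ ⊤)
    {k : ℕ} (hk : 1 ≤ k) (H : Fin k → Subgroup G) (t' : ℕ) (ht' : 0 < t')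
    (hH : ∀ q : G ⧸ N,
      multCount
        (List.ofFn fun i =>
          (((H i).map (QuotientGroup.mk' N) : Subgroup (G ⧸ N)) : Set (G ⧸ N))) q = t') :
    (∃ t : ℕ, 0 < t ∧
      ∀ g : G, multCount ((List.ofFn fun i => (H i : Set G)) ++ [(N : Set G)]) g = t) ∧
    ((∀ i, (H i).map (QuotientGroup.mk' N) ≠ ⊤) → (∀ i, H i ≠ ⊤) ∧ N ≠ ⊤) := by
  constructor
  · -- choose sections of the projection on each H i
    have hsec : ∀ (i : Fin k)
        (x : ((((H i).map (QuotientGroup.mk' N) : Subgroup (G ⧸ N)) : Set (G ⧸ N)))),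
        ∃ h : G, h ∈ H i ∧ QuotientGroup.mk' N h = (x : G ⧸ N) := by
      intro i x
      obtain ⟨y, hy, hyx⟩ := Subgroup.mem_map.1 x.2
      exact ⟨y, hy, hyx⟩
    choose lift liftmem liftspec using hsec
    refine ⟨t' * ∏ i, Nat.card ↥(H i ⊓ N),
      Nat.mul_pos ht' (Finset.prod_pos fun i _ => Nat.card_pos), fun g => ?_⟩
    rw [multCount_ofFn_append]
    -- step 1 : forget the last (determined) coordinate
    have e1 : {a : ∀ i, ((H i : Set G) : Type _) //
          QuotientGroup.mk' N (List.ofFn fun i => (a i : G)).prod = QuotientGroup.mk' N g} ≃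
        {p : (∀ i, ((H i : Set G) : Type _)) × ((N : Set G) : Type _) //
          (List.ofFn fun i => (p.1 i : G)).prod * (p.2 : G) = g} := by
      refine Equiv.ofBijective (fun a => ⟨(a.1, ⟨(List.ofFn fun i => (a.1 i : G)).prod⁻¹ * g,
        ?_⟩), by group⟩) ⟨?_, ?_⟩
      · rw [SetLike.mem_coe, ← QuotientGroup.eq_one_iff]
        have ha := a.2
        simp only [QuotientGroup.mk'_apply] at ha
        simp [QuotientGroup.mk_mul, ha]
      · rintro ⟨a, ha⟩ ⟨b, hb⟩ hab
        simp only [Subtype.mk.injEq, Prod.mk.injEq] at hab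
        exact Subtype.ext hab.1
      · rintro ⟨⟨a, n⟩, hp⟩
        have hmem : QuotientGroup.mk' N (List.ofFn fun i => (a i : G)).prod =
            QuotientGroup.mk' N g := by
          have hn : QuotientGroup.mk' N (n : G) = 1 := by
            rw [QuotientGroup.mk'_apply, QuotientGroup.eq_one_iff]
            exact n.2
          have : (List.ofFn fun i => (a i : G)).prod = g * (n : G)⁻¹ :=
            eq_mul_inv_of_mul_eq hp
          rw [this, map_mul, map_inv, hn]
          simp
        refine ⟨⟨a, hmem⟩, ?_⟩
        refine Subtype.ext (Prod.ext rfl (Subtype.ext ?_))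
        simp only
        rw [← hp]
        group
    have hm1 : ∀ (i : Fin k) (m : ↥(H i ⊓ N)), QuotientGroup.mk' N (m : G) = 1 := by
      intro i m
      rw [QuotientGroup.mk'_apply, QuotientGroup.eq_one_iff]
      exact (Subgroup.mem_inf.1 m.2).2
    -- step 2 : split each coordinate as a section value times an element of `H i ⊓ N`
    have e2 : ({b : ∀ i, ((((H i).map (QuotientGroup.mk' N) : Subgroup (G ⧸ N)) :
            Set (G ⧸ N)) : Type _) //
          (List.ofFn fun i => (b i : G ⧸ N)).prod = QuotientGroup.mk' N g} ×
          (∀ i, ↥(H i ⊓ N))) ≃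
        {a : ∀ i, ((H i : Set G) : Type _) //
          QuotientGroup.mk' N (List.ofFn fun i => (a i : G)).prod = QuotientGroup.mk' N g} := by
      refine Equiv.ofBijective (fun p => ⟨fun i => ⟨lift i (p.1.1 i) * (p.2 i : G),
        mul_mem (liftmem i _) (Subgroup.mem_inf.1 (p.2 i).2).1⟩, ?_⟩) ⟨?_, ?_⟩
      · show (QuotientGroup.mk' N)
          (List.ofFn fun i => lift i (p.1.1 i) * (p.2 i : G)).prod = QuotientGroup.mk' N g
        rw [map_list_prod, List.map_ofFn, Function.comp_def]
        have key : (fun i => (QuotientGroup.mk' N) (lift i (p.1.1 i) * (p.2 i : G)))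
            = fun i => (p.1.1 i : G ⧸ N) := by
          funext i
          rw [map_mul, liftspec, hm1, mul_one]
        rw [key]
        exact p.1.2
      · rintro ⟨⟨b, hb⟩, m⟩ ⟨⟨b', hb'⟩, m'⟩ hpe
        simp only [Subtype.mk.injEq] at hpe
        have hval : ∀ i, lift i (b i) * (m i : G) = lift i (b' i) * (m' i : G) := fun i =>
          Subtype.ext_iff.1 (congrFun hpe i)
        have hb2 : b = b' := by
          funext i
          have h3 := congrArg (QuotientGroup.mk' N) (hval i)
          rw [map_mul, map_mul, liftspec, liftspec, hm1, hm1, mul_one, mul_one] at h3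
          exact Subtype.ext h3
        subst hb2
        exact Prod.ext (Subtype.ext rfl)
          (funext fun i => Subtype.ext (mul_left_cancel (hval i)))
      · rintro ⟨a, ha⟩
        have hbmem : ∀ i, QuotientGroup.mk' N (a i : G) ∈
            ((H i).map (QuotientGroup.mk' N) : Subgroup (G ⧸ N)) := fun i =>
          Subgroup.mem_map.2 ⟨a i, (a i).2, rfl⟩
        set b : ∀ i, ((((H i).map (QuotientGroup.mk' N) : Subgroup (G ⧸ N)) :
            Set (G ⧸ N)) : Type _) := fun i => ⟨_, hbmem i⟩ with hbdef
        have hbprod : (List.ofFn fun i => (b i : G ⧸ N)).prod = QuotientGroup.mk' N g := by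
          rw [← ha, map_list_prod, List.map_ofFn, Function.comp_def]
        have hmmem : ∀ i, (lift i (b i))⁻¹ * (a i : G) ∈ H i ⊓ N := by
          intro i
          refine Subgroup.mem_inf.2 ⟨mul_mem (inv_mem (liftmem i _)) (a i).2, ?_⟩
          have h4 : (QuotientGroup.mk' N) ((lift i (b i))⁻¹ * (a i : G)) = 1 := by
            rw [map_mul, map_inv, liftspec]
            exact inv_mul_cancel _
          rw [QuotientGroup.mk'_apply, QuotientGroup.eq_one_iff] at h4
          exact h4
        refine ⟨⟨⟨b, hbprod⟩, fun i => ⟨_, hmmem i⟩⟩, ?_⟩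
        refine Subtype.ext (funext fun i => Subtype.ext ?_)
        show lift i (b i) * ((lift i (b i))⁻¹ * (a i : G)) = (a i : G)
        exact mul_inv_cancel_left _ _
    rw [← Nat.card_congr e1, ← Nat.card_congr e2, Nat.card_prod, Nat.card_pi]
    have hq := hH (QuotientGroup.mk' N g)
    rw [multCount_ofFn] at hq
    rw [hq]
  · exact fun hp => ⟨fun i hi => hp i (by
      rw [hi]; exact Subgroup.map_top_of_surjective _ (QuotientGroup.mk'_surjective N)), hN⟩
end
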